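/- Let A > 1, B > 1 and let ρ be a nonzero finite Borel measure on ℝ whose support is a compact subset of (B, ∞). Define ρ_∞ = 1 − ∫ dρ(x)/((x−1)(x+1)) and, for real z with z < B, w(z) = ρ_∞(z−1) + 1 + ∫ (z−1)/((x−1)(x−z)) dρ(x). Then A + w(−A) = (A+1)(A−1)·∫ dρ(x)/((x−1)(x+1)(x+A)), which is strictly positive; that is, writing w(−A) = −A₁, one has A₁ < A. -/

import Mathlib

open MeasureTheory Set

theorem nevanlinna_monotonicity_A (A B : ℝ) (hA : 1 < A) (hB : 1 < B)
    (ρ : Measure ℝ) [IsFiniteMeasure ρ] (hρ : ρ ≠ 0)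
    (K : Set ℝ) (hK : IsCompact K) (hKB : K ⊆ Set.Ioi B) (hsupp : ρ Kᶜ = 0)
    (ρInf : ℝ) (hρInf : ρInf = 1 - ∫ x, 1 / ((x - 1) * (x + 1)) ∂ρ)
    (w : ℝ → ℝ)
    (hw : ∀ z : ℝ, z ≤ B → w z = ρInf * (z - 1) + 1 + ∫ x, (z - 1) / ((x - 1) * (x - z)) ∂ρ) :
    A + w (-A) = (A + 1) * (A - 1) * ∫ x, 1 / ((x - 1) * (x + 1) * (x + A)) ∂ρ ∧
    0 < A + w (-A) := by
  have hKx : ∀ x ∈ K, 1 < x := fun x hx => hB.trans (hKB hx)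
  have hx1 : ∀ x ∈ K, x - 1 ≠ 0 := fun x hx => by have := hKx x hx; linarith
  have hx2 : ∀ x ∈ K, x + 1 ≠ 0 := fun x hx => by have := hKx x hx; linarith
  have hx3 : ∀ x ∈ K, x + A ≠ 0 := fun x hx => by have := hKx x hx; linarith
  have hKm : MeasurableSet K := hK.measurableSet
  have hae : ∀ᵐ x ∂ρ, x ∈ K := by
    rw [MeasureTheory.ae_iff]
    exact hsupp
  have hres : ρ.restrict K = ρ := Measure.restrict_eq_self_of_ae_mem hae
  -- integrability of the three functions
  have hint : ∀ f : ℝ → ℝ, ContinuousOn f K → Integrable f ρ := by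
    intro f hf
    rw [← hres]
    exact hf.integrableOn_compact hK
  have hc1 : ContinuousOn (fun x : ℝ => 1 / ((x - 1) * (x + 1))) K := by
    apply ContinuousOn.div continuousOn_const
    · fun_prop
    · intro x hx; exact mul_ne_zero (hx1 x hx) (hx2 x hx)
  have hc2 : ContinuousOn (fun x : ℝ => (-A - 1) / ((x - 1) * (x - -A))) K := by
    apply ContinuousOn.div continuousOn_const
    · fun_prop
    · intro x hx
      have : x - -A = x + A := by ring
      rw [this]
      exact mul_ne_zero (hx1 x hx) (hx3 x hx)
  have hc3 : ContinuousOn (fun x : ℝ => 1 / ((x - 1) * (x + 1) * (x + A))) K := by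
    apply ContinuousOn.div continuousOn_const
    · fun_prop
    · intro x hx; exact mul_ne_zero (mul_ne_zero (hx1 x hx) (hx2 x hx)) (hx3 x hx)
  have hi1 := hint _ hc1
  have hi2 := hint _ hc2
  have hi3 := hint _ hc3
  set I := ∫ x, 1 / ((x - 1) * (x + 1)) ∂ρ with hI
  set J := ∫ x, (-A - 1) / ((x - 1) * (x - -A)) ∂ρ with hJ
  set L := ∫ x, 1 / ((x - 1) * (x + 1) * (x + A)) ∂ρ with hL
  -- pointwise identity
  have hptwise : ∀ᵐ x ∂ρ, (A + 1) * (1 / ((x - 1) * (x + 1))) + (-A - 1) / ((x - 1) * (x - -A))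
      = (A + 1) * (A - 1) * (1 / ((x - 1) * (x + 1) * (x + A))) := by
    filter_upwards [hae] with x hx
    have h1 := hx1 x hx
    have h2 := hx2 x hx
    have h3 := hx3 x hx
    rw [sub_neg_eq_add]
    field_simp
    ring
  have hkey : (A + 1) * I + J = (A + 1) * (A - 1) * L := by
    have h1 : ∫ x, ((A + 1) * (1 / ((x - 1) * (x + 1))) + (-A - 1) / ((x - 1) * (x - -A))) ∂ρ
        = (A + 1) * (A - 1) * L := by
      rw [integral_congr_ae hptwise, integral_const_mul]
    rw [← h1, integral_add (hi1.const_mul _) hi2, integral_const_mul]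
  -- main equality
  have hwA := hw (-A) (by linarith)
  have hmain : A + w (-A) = (A + 1) * (A - 1) * L := by
    rw [hwA, hρInf, ← hJ, ← hkey]; ring
  refine ⟨hmain, ?_⟩
  rw [hmain]
  have hLpos : 0 < L := by
    have hnn : 0 ≤ᵐ[ρ] fun x : ℝ => 1 / ((x - 1) * (x + 1) * (x + A)) := by
      filter_upwards [hae] with x hx
      have h := hKx x hx
      have : (0:ℝ) < (x - 1) * (x + 1) * (x + A) := mul_pos (mul_pos (by linarith) (by linarith)) (by linarith)
      positivity
    rw [hL, (integral_pos_iff_support_of_nonneg_ae hnn hi3)]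
    have hKs : K ⊆ Function.support fun x : ℝ => 1 / ((x - 1) * (x + 1) * (x + A)) := by
      intro x hx
      have h := hKx x hx
      have : (0:ℝ) < (x - 1) * (x + 1) * (x + A) := mul_pos (mul_pos (by linarith) (by linarith)) (by linarith)
      simp only [Function.mem_support]
      positivity
    have huniv : 0 < ρ univ := Measure.measure_univ_pos.mpr hρ
    have : ρ univ ≤ ρ K := by
      calc ρ univ = ρ (K ∪ Kᶜ) := by rw [union_compl_self]
        _ ≤ ρ K + ρ Kᶜ := measure_union_le _ _
        _ = ρ K := by rw [hsupp, add_zero]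
    exact lt_of_lt_of_le (lt_of_lt_of_le huniv this) (measure_mono hKs)
  have : (0:ℝ) < (A + 1) * (A - 1) := by nlinarith
  positivity
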